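/- Let Θ be an m×m real symmetric positive semidefinite matrix, λ > 0, V = (λ/2)I + Θ, and Y, M₀ ∈ ℝ^m, and set M∞ = M₀ + V^{−1}Θ(Y − M₀). Define R∞ by the stationarity relation (2/m)(M∞ − M₀)·(M∞ − Y) = −2λ R∞. Then R∞ = (1/(2m)) (M₀ − Y)ᵀ V^{−2}Θ (M₀ − Y). -/

import Mathlib

open Matrix

/-- With `Θ` an `m×m` real symmetric positive semidefinite matrix,
`λ > 0`, `V = (λ/2)I + Θ`, `Y, M₀ ∈ ℝ^m` and `M∞ = M₀ + V⁻¹Θ(Y − M₀)`, if `R∞` is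
defined by the stationarity relation `(2/m)(M∞ − M₀)·(M∞ − Y) = −2λR∞`, then
`R∞ = (1/(2m))(M₀ − Y)ᵀ V⁻²Θ (M₀ − Y)`. -/
theorem stmt15 {m : ℕ} (Θ : Matrix (Fin m) (Fin m) ℝ)
    (hsym : Θ.IsSymm) (hpsd : Θ.PosSemidef)
    (lam : ℝ) (hlam : 0 < lam) (Y M₀ : Fin m → ℝ)
    (V : Matrix (Fin m) (Fin m) ℝ)
    (hV : V = (lam / 2) • (1 : Matrix (Fin m) (Fin m) ℝ) + Θ)
    (Minf : Fin m → ℝ) (hMinf : Minf = M₀ + (V⁻¹ * Θ) *ᵥ (Y - M₀))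
    (Rinf : ℝ)
    (hRinf : (2 / (m : ℝ)) * ((Minf - M₀) ⬝ᵥ (Minf - Y)) = -(2 * lam * Rinf)) :
    Rinf = (1 / (2 * (m : ℝ))) * ((M₀ - Y) ⬝ᵥ ((V⁻¹ * V⁻¹ * Θ) *ᵥ (M₀ - Y))) := by
  rcases Nat.eq_zero_or_pos m with hm | hm
  · subst hm
    have h0 : ((Minf - M₀) ⬝ᵥ (Minf - Y)) = 0 := by simp [dotProduct]
    rw [h0, mul_zero] at hRinf
    have hz : lam * Rinf = 0 := by linarith
    rcases mul_eq_zero.mp hz with h | h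
    · exact absurd h (ne_of_gt hlam)
    · simp [h, dotProduct]
  -- main case
  have hmne : (m : ℝ) ≠ 0 := Nat.cast_ne_zero.mpr hm.ne'
  -- V is positive definite, hence invertible
  have hIpd : ((lam / 2) • (1 : Matrix (Fin m) (Fin m) ℝ)).PosDef := by
    have hdiag : ((lam / 2) • (1 : Matrix (Fin m) (Fin m) ℝ))
        = Matrix.diagonal (fun _ => lam / 2) := by
      ext i j
      by_cases h : i = j <;> simp [Matrix.one_apply, Matrix.diagonal_apply, h]
    rw [hdiag]
    exact Matrix.PosDef.diagonal (fun _ => by linarith)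
  have hVpd : V.PosDef := hV ▸ hIpd.add_posSemidef hpsd
  have hVu : IsUnit V.det := hVpd.det_pos.ne'.isUnit
  have hVinv : V⁻¹ * V = 1 := nonsing_inv_mul V hVu
  have hVinv' : V * V⁻¹ = 1 := mul_nonsing_inv V hVu
  -- symmetry of V and V⁻¹
  have hVsym : Vᵀ = V := by
    rw [hV]; simp [transpose_add, transpose_smul, hsym.eq]
  have hVisym : (V⁻¹)ᵀ = V⁻¹ := by
    rw [transpose_nonsing_inv, hVsym]
  -- Θ commutes with V and with V⁻¹
  have hcomm : Θ * V = V * Θ := by rw [hV]; noncomm_ring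
  have hcomm' : Θ * V⁻¹ = V⁻¹ * Θ := by
    calc Θ * V⁻¹ = V⁻¹ * (V * Θ) * V⁻¹ := by
          rw [← Matrix.mul_assoc, hVinv, Matrix.one_mul]
    _ = V⁻¹ * (Θ * V) * V⁻¹ := by rw [hcomm]
    _ = V⁻¹ * Θ * (V * V⁻¹) := by simp [Matrix.mul_assoc]
    _ = V⁻¹ * Θ := by rw [hVinv', Matrix.mul_one]
  -- key matrix identities
  have hkey : (V⁻¹ * Θ)ᵀ * ((lam / 2) • V⁻¹) = (lam / 2) • (V⁻¹ * V⁻¹ * Θ) := by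
    rw [transpose_mul, hVisym, hsym.eq, Matrix.mul_smul]
    congr 1
    calc Θ * V⁻¹ * V⁻¹ = V⁻¹ * Θ * V⁻¹ := by rw [hcomm']
    _ = V⁻¹ * (Θ * V⁻¹) := by rw [Matrix.mul_assoc]
    _ = V⁻¹ * (V⁻¹ * Θ) := by rw [hcomm']
    _ = V⁻¹ * V⁻¹ * Θ := by rw [Matrix.mul_assoc]
  have hM2 : (1 : Matrix (Fin m) (Fin m) ℝ) - V⁻¹ * Θ = (lam / 2) • V⁻¹ := by
    calc (1 : Matrix (Fin m) (Fin m) ℝ) - V⁻¹ * Θ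
        = V⁻¹ * V - V⁻¹ * Θ := by rw [hVinv]
    _ = V⁻¹ * (V - Θ) := by rw [Matrix.mul_sub]
    _ = V⁻¹ * ((lam / 2) • 1) := by rw [hV]; congr 1; abel
    _ = (lam / 2) • V⁻¹ := by rw [Matrix.mul_smul, Matrix.mul_one]
  set x : Fin m → ℝ := M₀ - Y with hx
  have h1 : Minf - M₀ = (V⁻¹ * Θ) *ᵥ (-x) := by
    rw [hMinf]
    have hy : Y - M₀ = -x := by rw [hx]; abel
    rw [hy]; abel
  have h2 : Minf - Y = ((lam / 2) • V⁻¹) *ᵥ x := by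
    rw [← hM2, sub_mulVec, one_mulVec, hMinf]
    have hy : Y - M₀ = -x := by rw [hx]; abel
    rw [hy, mulVec_neg, hx]
    abel
  -- rewrite the dot product
  have key2 : ∀ (A B : Matrix (Fin m) (Fin m) ℝ) (u v : Fin m → ℝ),
      (A *ᵥ u) ⬝ᵥ (B *ᵥ v) = u ⬝ᵥ ((Aᵀ * B) *ᵥ v) := by
    intro A B u v
    rw [← vecMul_transpose, dotProduct_mulVec, vecMul_vecMul, dotProduct_mulVec]
  have hdot : (Minf - M₀) ⬝ᵥ (Minf - Y)
      = -((lam / 2) * (x ⬝ᵥ ((V⁻¹ * V⁻¹ * Θ) *ᵥ x))) := by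
    rw [h1, h2, key2, hkey, smul_mulVec, dotProduct_smul, neg_dotProduct]
    simp [smul_eq_mul]
  set S : ℝ := x ⬝ᵥ ((V⁻¹ * V⁻¹ * Θ) *ᵥ x) with hS
  rw [hdot] at hRinf
  have hEq : lam * S = 2 * lam * Rinf * (m : ℝ) := by
    field_simp at hRinf
    linear_combination (-lam) * hRinf
  have hS2 : S = 2 * Rinf * (m : ℝ) := by
    have : lam * S = lam * (2 * Rinf * (m : ℝ)) := by linarith
    exact mul_left_cancel₀ (ne_of_gt hlam) this
  rw [hS2]
  field_simp
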